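/- arXiv:math/0110267 — 4 statements merged into one kernel-verified Lean document; each statement's English description precedes it below -/
import Mathlib

section
/- If A is a liminal C*-algebra, then every primitive ideal of A is a maximal closed two-sided ideal of A. -/
open scoped InnerProductSpace CStarAlgebra
open Metric

universe u

section Aux

variable {H : Type*} [NormedAddCommGroup H] [InnerProductSpace ℂ H]

theorem rankOne_isCompactOperator (u v : H) :
    IsCompactOperator ((innerSL ℂ v).smulRight u) := by
  refine ⟨(fun c : ℂ => c • u) '' Metric.closedBall 0 ‖v‖,
    ((isCompact_closedBall 0 ‖v‖).image (by fun_prop)), ?_⟩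
  filter_upwards [Metric.ball_mem_nhds (0 : H) one_pos] with x hx
  refine ⟨⟪v, x⟫_ℂ, ?_, rfl⟩
  simp only [Metric.mem_closedBall, dist_zero_right]
  calc ‖⟪v, x⟫_ℂ‖ ≤ ‖v‖ * ‖x‖ := norm_inner_le_norm v x
  _ ≤ ‖v‖ * 1 := by
      have := mem_ball_zero_iff.mp hx
      exact mul_le_mul_of_nonneg_left this.le (norm_nonneg v)
  _ = ‖v‖ := mul_one _

variable [CompleteSpace H]

theorem approx_finiteRank {T : H →L[ℂ] H} (hT : IsCompactOperator T) {ε : ℝ} (hε : 0 < ε) :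
    ∃ (n : ℕ) (u v : Fin n → H),
      ‖T - ∑ i, (innerSL ℂ (v i)).smulRight (u i)‖ ≤ ε := by
  classical
  have hcl : IsCompact (closure (T '' Metric.closedBall 0 1)) :=
    (isCompactOperator_iff_isCompact_closure_image_closedBall (T : H →ₗ[ℂ] H) zero_lt_one).mp hT
  have htb : TotallyBounded (T '' Metric.closedBall 0 1) :=
    (hcl.totallyBounded).subset subset_closure
  obtain ⟨t, htfin, hcov⟩ := totallyBounded_iff.mp htb ε hε
  set U : Submodule ℂ H := Submodule.span ℂ t with hU
  haveI : FiniteDimensional ℂ U := FiniteDimensional.span_of_finite ℂ htfin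
  haveI : CompleteSpace U := FiniteDimensional.complete ℂ U
  set b := stdOrthonormalBasis ℂ U
  set n := Module.finrank ℂ U
  refine ⟨n, fun i => (b i : H), fun i => ContinuousLinearMap.adjoint T (b i : H), ?_⟩
  set F : H →L[ℂ] H :=
    ∑ i, (innerSL ℂ ((ContinuousLinearMap.adjoint T (b i : H)))).smulRight (b i : H)
  have hF : ∀ x : H, F x = (U.orthogonalProjectionOnto (T x) : H) := by
    intro x
    have := b.orthogonalProjectionOnto_apply_eq_sum (T x)
    have h2 : ((U.orthogonalProjectionOnto (T x) : U) : H)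
        = ∑ i, ⟪(b i : H), T x⟫_ℂ • (b i : H) := by
      rw [this]; push_cast [Submodule.coe_sum]; rfl
    rw [h2]
    simp only [F, ContinuousLinearMap.sum_apply, ContinuousLinearMap.smulRight_apply,
      innerSL_apply_apply, ContinuousLinearMap.adjoint_inner_left]
  have key : ∀ x : H, ‖x‖ ≤ 1 → ‖(T - F) x‖ ≤ ε := by
    intro x hx
    obtain ⟨c, hct, hc⟩ : ∃ c ∈ t, T x ∈ Metric.ball c ε := by
      have : T x ∈ ⋃ y ∈ t, Metric.ball y ε := hcov ⟨x, by simpa using hx, rfl⟩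
      simpa using this
    have hcU : c ∈ U := Submodule.subset_span hct
    have hmin : ‖T x - (U.orthogonalProjectionOnto (T x) : H)‖ ≤ ‖T x - c‖ := by
      rw [← Submodule.starProjection_apply, Submodule.starProjection_minimal]
      refine ciInf_le_of_le ⟨0, fun r hr => ?_⟩ (⟨c, hcU⟩ : U) le_rfl
      · obtain ⟨y, rfl⟩ := hr; exact norm_nonneg _
    calc ‖(T - F) x‖ = ‖T x - (U.orthogonalProjectionOnto (T x) : H)‖ := by
          rw [ContinuousLinearMap.sub_apply, hF]
      _ ≤ ‖T x - c‖ := hmin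
      _ ≤ ε := by rw [mem_ball, dist_eq_norm] at hc; exact hc.le
  refine ContinuousLinearMap.opNorm_le_bound _ hε.le fun x => ?_
  rcases eq_or_ne x 0 with rfl | hx0
  · simp
  · have hnx : (0:ℝ) < ‖x‖ := norm_pos_iff.mpr hx0
    have := key (‖x‖⁻¹ • x) (by rw [norm_smul, norm_inv, norm_norm, inv_mul_cancel₀ hnx.ne'])
    rw [ContinuousLinearMap.map_smul_of_tower, norm_smul, norm_inv, norm_norm] at this
    calc ‖(T - F) x‖ = ‖x‖ * (‖x‖⁻¹ * ‖(T - F) x‖) := by field_simp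
      _ ≤ ‖x‖ * ε := mul_le_mul_of_nonneg_left this hnx.le
      _ = ε * ‖x‖ := mul_comm _ _

end Aux

/-- A `⋆`-representation of a C⋆-algebra `A` on a complex Hilbert space. -/
structure CStarRep (A : Type u) [NonUnitalCStarAlgebra A] : Type (u + 1) where
  /-- The underlying Hilbert space of the representation. -/
  carrier : Type u
  [normedAddCommGroup : NormedAddCommGroup carrier]
  [innerProductSpace : InnerProductSpace ℂ carrier]
  [completeSpace : CompleteSpace carrier]
  /-- The `⋆`-homomorphism into the bounded operators. -/
  toFun : A →⋆ₙₐ[ℂ] (carrier →L[ℂ] carrier)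

attribute [instance] CStarRep.normedAddCommGroup CStarRep.innerProductSpace CStarRep.completeSpace

/-- A representation is (topologically) irreducible if it is nonzero and the only closed
subspaces of `H` invariant under `π(A)` are `0` and `H`. -/
def CStarRep.IsIrreducible {A : Type u} [NonUnitalCStarAlgebra A] (π : CStarRep A) : Prop :=
  π.toFun ≠ 0 ∧
    ∀ K : Submodule ℂ π.carrier, IsClosed (K : Set π.carrier) →
      (∀ a : A, ∀ x ∈ K, π.toFun a x ∈ K) → K = ⊥ ∨ K = ⊤

/-- The kernel of a representation, as a subset of `A`. -/
def CStarRep.ker {A : Type u} [NonUnitalCStarAlgebra A] (π : CStarRep A) : Set A :=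
  {a : A | π.toFun a = 0}

/-- A primitive ideal is the kernel of an irreducible `⋆`-representation. -/
def IsPrimitiveIdeal {A : Type u} [NonUnitalCStarAlgebra A] (I : Set A) : Prop :=
  ∃ π : CStarRep A, π.IsIrreducible ∧ π.ker = I

/-- The primitive ideal space `Prim(A)` of a C⋆-algebra `A`. -/
def PrimSpace (A : Type u) [NonUnitalCStarAlgebra A] : Type u :=
  {I : Set A // IsPrimitiveIdeal I}

/-- The hull-kernel (Jacobson) topology on `Prim(A)`: the open sets are generated by the sets
`U_J = {P ∈ Prim(A) : J ⊄ P}`; equivalently, the closure of `W ⊆ Prim(A)` is the set of all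
primitive ideals containing `⋂ W`. -/
instance (A : Type u) [NonUnitalCStarAlgebra A] : TopologicalSpace (PrimSpace A) :=
  TopologicalSpace.generateFrom {U | ∃ J : Set A, U = {P : PrimSpace A | ¬ J ⊆ P.1}}

/-- A C⋆-algebra is liminal if every irreducible representation maps onto exactly the compact
operators: `π(A) = K(H)`. -/
def IsLiminal (A : Type u) [NonUnitalCStarAlgebra A] : Prop :=
  ∀ π : CStarRep A, π.IsIrreducible →
    Set.range ⇑π.toFun = {T : π.carrier →L[ℂ] π.carrier | IsCompactOperator T}

/-- If `A` is a liminal C⋆-algebra, then every primitive ideal of `A` is a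
maximal closed two-sided ideal: it is a proper closed two-sided ideal, and it is maximal among
proper closed two-sided ideals of `A`. -/
theorem primitiveIdeal_isMaximalClosed_of_isLiminal {A : Type u} [NonUnitalCStarAlgebra A]
    (hA : IsLiminal A) (I : Set A) (hI : IsPrimitiveIdeal I) :
    (∃ J : TwoSidedIdeal A, (J : Set A) = I) ∧ IsClosed I ∧ I ≠ Set.univ ∧
      ∀ J : TwoSidedIdeal A, IsClosed (J : Set A) → (J : Set A) ≠ Set.univ →
        I ⊆ (J : Set A) → (J : Set A) = I := by
  classical
  obtain ⟨π, hπ, hker⟩ := hI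
  subst hker
  set H := π.carrier with hH
  set φ := π.toFun with hφ
  have hcont : Continuous φ := map_continuous φ
  have hRange : Set.range ⇑φ = {T : H →L[ℂ] H | IsCompactOperator T} := hA π hπ
  refine ⟨?_, ?_, ?_, ?_⟩
  · -- it is a two-sided ideal
    refine ⟨TwoSidedIdeal.mk' π.ker (show φ 0 = 0 by simp)
      (fun {x y} hx hy => show φ (x + y) = 0 by
        rw [map_add, show φ x = 0 from hx, show φ y = 0 from hy, add_zero])
      (fun {x} hx => show φ (-x) = 0 by rw [map_neg, show φ x = 0 from hx, neg_zero])
      (fun {x y} hy => show φ (x * y) = 0 by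
        rw [map_mul, show φ y = 0 from hy, mul_zero])
      (fun {x y} hx => show φ (x * y) = 0 by
        rw [map_mul, show φ x = 0 from hx, zero_mul]), ?_⟩
    ext x
    simp only [SetLike.mem_coe, TwoSidedIdeal.mem_mk']
    exact TwoSidedIdeal.mem_mk' _ _ _ _ _ _ x
  · -- closed
    have : π.ker = ⇑φ ⁻¹' {0} := rfl
    rw [this]
    exact isClosed_singleton.preimage hcont
  · -- proper
    intro h
    refine hπ.1 (DFunLike.ext _ _ fun a => ?_)
    have := Set.eq_univ_iff_forall.mp h a
    simpa using (show φ a = 0 from this)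
  · -- maximality
    intro J hJc hJp hsub
    by_contra hne
    have hex : ∃ a, a ∈ J ∧ φ a ≠ 0 := by
      by_contra h
      push_neg at h
      exact hne (Set.Subset.antisymm (fun x hx => h x hx) hsub)
    obtain ⟨a, haJ, haS⟩ := hex
    set S := φ a with hS
    obtain ⟨x, hSx⟩ : ∃ x, S x ≠ 0 := by
      by_contra h
      push_neg at h
      exact haS (ContinuousLinearMap.ext h)
    -- every rank-one operator is in φ '' J
    have hrank : ∀ u v : H, ∃ j, j ∈ J ∧ φ j = (innerSL ℂ v).smulRight u := by
      intro u v
      set k : ℂ := (‖S x‖ : ℂ) ^ 2 with hk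
      have hk0 : k ≠ 0 := by
        simp only [hk, ne_eq, pow_eq_zero_iff, OfNat.ofNat_ne_zero, not_false_eq_true,
          Complex.ofReal_eq_zero, norm_eq_zero]
        exact hSx
      obtain ⟨b1, hb1⟩ : ∃ b1, φ b1 = (innerSL ℂ (S x)).smulRight (k⁻¹ • u) := by
        have : ((innerSL ℂ (S x)).smulRight (k⁻¹ • u)) ∈ Set.range ⇑φ := by
          rw [hRange]; exact rankOne_isCompactOperator _ _
        exact this
      obtain ⟨b2, hb2⟩ : ∃ b2, φ b2 = (innerSL ℂ v).smulRight x := by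
        have : ((innerSL ℂ v).smulRight x) ∈ Set.range ⇑φ := by
          rw [hRange]; exact rankOne_isCompactOperator _ _
        exact this
      refine ⟨b1 * a * b2, ?_, ?_⟩
      · exact TwoSidedIdeal.mul_mem_right _ _ _ (TwoSidedIdeal.mul_mem_left _ _ _ haJ)
      · ext y
        have h2y : φ b2 y = ⟪v, y⟫_ℂ • x := by
          rw [hb2]; simp [ContinuousLinearMap.smulRight_apply]
        calc (φ (b1 * a * b2)) y = φ b1 (S (φ b2 y)) := by
              simp [map_mul, ContinuousLinearMap.mul_apply]; rfl
          _ = φ b1 (⟪v, y⟫_ℂ • S x) := by rw [h2y, map_smul]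
          _ = (⟪v, y⟫_ℂ * ⟪S x, S x⟫_ℂ) • (k⁻¹ • u) := by
              rw [hb1]
              simp [ContinuousLinearMap.smulRight_apply, inner_smul_right, smul_smul, mul_assoc]
          _ = ⟪v, y⟫_ℂ • u := by
              rw [show ⟪S x, S x⟫_ℂ = k from inner_self_eq_norm_sq_to_K (𝕜 := ℂ) (S x),
                smul_smul, mul_assoc, mul_inv_cancel₀ hk0, mul_one]
          _ = ((innerSL ℂ v).smulRight u) y := by
              simp [ContinuousLinearMap.smulRight_apply]
    -- finite sums of rank ones are in φ '' J
    have hsum : ∀ (n : ℕ) (u v : Fin n → H),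
        ∃ j, j ∈ J ∧ φ j = ∑ i, (innerSL ℂ (v i)).smulRight (u i) := by
      intro n u v
      choose j hjJ hjφ using fun i => hrank (u i) (v i)
      exact ⟨∑ i, j i, sum_mem fun i _ => hjJ i,
        by rw [map_sum]; exact Finset.sum_congr rfl fun i _ => hjφ i⟩
    -- the compact operators as a Banach space
    set Kc : Submodule ℂ (H →L[ℂ] H) :=
      { carrier := {T | IsCompactOperator T}
        add_mem' := fun h1 h2 => by simpa using h1.add h2
        zero_mem' := by simpa using isCompactOperator_zero
        smul_mem' := fun c T h => by simpa using h.smul c } with hKc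
    have hKcClosed : IsClosed (Kc : Set (H →L[ℂ] H)) := isClosed_setOf_isCompactOperator
    haveI : CompleteSpace Kc := hKcClosed.completeSpace_coe
    set φL : A →L[ℂ] (H →L[ℂ] H) :=
      ⟨{ toFun := φ, map_add' := map_add φ, map_smul' := fun c x => map_smul φ c x }, hcont⟩
      with hφL
    have hmemKc : ∀ a : A, φ a ∈ Kc := fun a => by
      show IsCompactOperator ⇑(φ a)
      have : φ a ∈ Set.range ⇑φ := ⟨a, rfl⟩
      rwa [hRange] at this
    set ψ : A →L[ℂ] Kc := φL.codRestrict Kc hmemKc with hψ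
    have hsurj : Function.Surjective ψ := by
      intro T
      have : (T : H →L[ℂ] H) ∈ Set.range ⇑φ := by rw [hRange]; exact T.2
      obtain ⟨a, ha⟩ := this
      exact ⟨a, Subtype.ext ha⟩
    obtain ⟨C, hC0, hCl⟩ := ψ.exists_preimage_norm_le hsurj
    -- J is all of A
    have hJuniv : (J : Set A) = Set.univ := by
      rw [Set.eq_univ_iff_forall]
      intro b
      rw [← hJc.closure_eq, Metric.mem_closure_iff]
      intro ε hε
      set δ := ε / (C + 1) with hδ
      have hδ0 : 0 < δ := div_pos hε (by linarith)
      have hb : IsCompactOperator ⇑(φ b) := hmemKc b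
      obtain ⟨n, u, v, hFn⟩ := approx_finiteRank hb hδ0
      obtain ⟨j, hjJ, hjφ⟩ := hsum n u v
      obtain ⟨c, hc1, hc2⟩ := hCl ⟨φ (b - j), hmemKc _⟩
      have hφc : φ c = φ (b - j) := congrArg Subtype.val hc1
      have hmem : b - c ∈ J := by
        have h0 : φ (b - j - c) = 0 := by
          rw [map_sub, hφc, sub_self]
        have hk' : b - j - c ∈ (J : Set A) := hsub h0
        have hadd := J.add_mem (SetLike.mem_coe.mp hk') hjJ
        have he : b - j - c + j = b - c := by abel
        rwa [he] at hadd
      refine ⟨b - c, hmem, ?_⟩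
      have hnorm : ‖(⟨φ (b - j), hmemKc _⟩ : Kc)‖ ≤ δ := by
        show ‖φ (b - j)‖ ≤ δ
        have : φ (b - j) = φ b - ∑ i, (innerSL ℂ (v i)).smulRight (u i) := by
          rw [map_sub, hjφ]
        rw [this]
        exact hFn
      calc dist b (b - c) = ‖c‖ := by simp [dist_eq_norm]
        _ ≤ C * δ := le_trans hc2 (mul_le_mul_of_nonneg_left hnorm hC0.le)
        _ < (C + 1) * δ := by
            exact mul_lt_mul_of_pos_right (lt_add_one C) hδ0
        _ = ε := by
            rw [hδ, mul_div_cancel₀]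
            positivity
    exact hJp hJuniv
end

section
/- If A is a liminal C*-algebra, then the primitive ideal space Prim(A) with the hull-kernel topology is a T₁-space: every singleton is closed. -/
universe u

open scoped InnerProductSpace in
/-- Rank-one operators on a Hilbert space are compact. -/
lemma rankOne_isCompactOperator_s11 {H : Type*} [NormedAddCommGroup H] [InnerProductSpace ℂ H]
    (x y : H) : IsCompactOperator ((innerSL ℂ y).smulRight x) := by
  refine ⟨(fun c : ℂ => c • x) '' Metric.closedBall 0 ‖y‖,
    ((isCompact_closedBall 0 _).image (by continuity)), ?_⟩
  filter_upwards [Metric.closedBall_mem_nhds (0 : H) one_pos] with z hz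
  refine ⟨⟪y, z⟫_ℂ, ?_, rfl⟩
  simp only [Metric.mem_closedBall, dist_zero_right]
  calc ‖⟪y, z⟫_ℂ‖ ≤ ‖y‖ * ‖z‖ := norm_inner_le_norm y z
    _ ≤ ‖y‖ * 1 := by
        have : ‖z‖ ≤ 1 := by simpa using hz
        exact mul_le_mul_of_nonneg_left this (norm_nonneg y)
    _ = ‖y‖ := mul_one _

open scoped CStarAlgebra in
lemma norm_le_of_ker_le' {A : Type u} [NonUnitalCStarAlgebra A] (π ρ : CStarRep A)
    [Nontrivial π.carrier] [Nontrivial ρ.carrier]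
    (h : ∀ y : A, π.toFun y = 0 → ρ.toFun y = 0) (x : A) :
    ‖ρ.toFun x‖ ≤ ‖π.toFun x‖ := by
  by_contra hlt
  push_neg at hlt
  set c : A := star x * x with hc
  have hcsa : IsSelfAdjoint c := IsSelfAdjoint.star_mul_self x
  set r : ℝ := ‖π.toFun c‖ with hr
  set s : ℝ := ‖ρ.toFun c‖ with hs
  have h1 : r = ‖π.toFun x‖ * ‖π.toFun x‖ := by
    rw [hr, hc, map_mul, map_star, CStarRing.norm_star_mul_self]
  have h2 : s = ‖ρ.toFun x‖ * ‖ρ.toFun x‖ := by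
    rw [hs, hc, map_mul, map_star, CStarRing.norm_star_mul_self]
  have hrs : r < s := by nlinarith [norm_nonneg (π.toFun x), norm_nonneg (ρ.toFun x)]
  have hr0 : 0 ≤ r := norm_nonneg _
  set f : ℝ → ℝ := fun t => max (|t| - r) 0 with hf
  have hfc : Continuous f := by fun_prop
  have hf0 : f 0 = 0 := by simp [hf, hr0]
  have hcont : Continuous π.toFun := map_continuous π.toFun
  have hcont' : Continuous ρ.toFun := map_continuous ρ.toFun
  have hπsa : IsSelfAdjoint (π.toFun c) := hcsa.map π.toFun
  have hρsa : IsSelfAdjoint (ρ.toFun c) := hcsa.map ρ.toFun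
  have hπc : π.toFun (cfcₙ f c) = cfcₙ f (π.toFun c) :=
    NonUnitalStarAlgHomClass.map_cfcₙ π.toFun f c hfc.continuousOn hf0 hcont hcsa hπsa
  have hρcfc : ρ.toFun (cfcₙ f c) = cfcₙ f (ρ.toFun c) :=
    NonUnitalStarAlgHomClass.map_cfcₙ ρ.toFun f c hfc.continuousOn hf0 hcont' hcsa hρsa
  have hπc0 : cfcₙ f (π.toFun c) = 0 := by
    have heq : (quasispectrum ℝ (π.toFun c)).EqOn f 0 := by
      intro t ht
      rw [quasispectrum_eq_spectrum_union_zero] at ht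
      have habs : |t| ≤ r := by
        rcases ht with ht | ht
        · simpa [Real.norm_eq_abs] using spectrum.norm_le_norm_of_mem ht
        · simp only [Set.mem_singleton_iff] at ht
          simp [ht, hr0]
      simp [hf, Pi.zero_apply, sub_nonpos.mpr habs, max_eq_right]
    calc cfcₙ f (π.toFun c) = cfcₙ (0 : ℝ → ℝ) (π.toFun c) := cfcₙ_congr heq
      _ = 0 := cfcₙ_zero ℝ _
  have hρc : cfcₙ f (ρ.toFun c) = 0 := by
    rw [← hρcfc]
    exact h _ (by rw [hπc, hπc0])
  have hs0 : 0 ≤ s := by linarith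
  have key : ∀ t₀ : ℝ, t₀ ∈ spectrum ℝ (ρ.toFun c) → |t₀| = s → False := by
    intro t₀ hmem habs
    have hmemq := spectrum_subset_quasispectrum ℝ (ρ.toFun c) hmem
    have himg : f t₀ ∈ quasispectrum ℝ (cfcₙ f (ρ.toFun c)) := by
      rw [cfcₙ_map_quasispectrum f _ hfc.continuousOn hf0 hρsa]
      exact ⟨t₀, hmemq, rfl⟩
    rw [hρc, quasispectrum_eq_spectrum_union_zero, spectrum.zero_eq] at himg
    have hft : f t₀ = s - r := by
      show max (|t₀| - r) 0 = s - r
      rw [habs, max_eq_left (by linarith)]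
    simp only [Set.union_self, Set.mem_singleton_iff] at himg
    rw [hft] at himg
    linarith
  obtain ht0 | ht0 := CStarAlgebra.norm_or_neg_norm_mem_spectrum (a := ρ.toFun c) hρsa
  · exact key _ ht0 (abs_of_nonneg hs0)
  · exact key _ ht0 (by rw [abs_neg, abs_of_nonneg hs0])


open scoped InnerProductSpace in
lemma exists_finrank_approx' {H : Type*} [NormedAddCommGroup H] [InnerProductSpace ℂ H]
    [CompleteSpace H] (T : H →L[ℂ] H) (hT : IsCompactOperator T) {ε : ℝ} (hε : 0 < ε) :
    ∃ (n : ℕ) (u v : Fin n → H),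
      ‖T - ∑ i, (innerSL ℂ (v i)).smulRight (u i)‖ ≤ ε := by
  have hK : IsCompact (closure (⇑T '' Metric.closedBall 0 1)) :=
    hT.isCompact_closure_image_closedBall 1
  obtain ⟨t, htfin, hcover⟩ := (Metric.totallyBounded_iff).mp hK.totallyBounded ε hε
  set U : Submodule ℂ H := Submodule.span ℂ t with hU
  haveI : FiniteDimensional ℂ U := FiniteDimensional.span_of_finite ℂ htfin
  set P : H →L[ℂ] H := U.subtypeL.comp (Submodule.orthogonalProjectionOnto U) with hP
  have hPz : ∀ w : H, ∀ y ∈ t, ‖w - P w‖ ≤ ‖w - y‖ := by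
    intro w y hy
    have hmin := Submodule.starProjection_minimal (U := U) w
    have hle : (⨅ x : U, ‖w - x‖) ≤ ‖w - (⟨y, Submodule.subset_span hy⟩ : U)‖ :=
      ciInf_le ⟨0, fun b hb => by rcases hb with ⟨x, rfl⟩; positivity⟩ _
    calc ‖w - P w‖ = ⨅ x : U, ‖w - x‖ := hmin
      _ ≤ ‖w - y‖ := hle
  have hball : ∀ z : H, ‖z‖ ≤ 1 → ‖T z - P (T z)‖ ≤ ε := by
    intro z hz
    have hmem : T z ∈ ⋃ y ∈ t, Metric.ball y ε :=
      hcover (subset_closure ⟨z, by simpa using hz, rfl⟩)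
    simp only [Set.mem_iUnion, Metric.mem_ball, exists_prop] at hmem
    obtain ⟨y, hyt, hdy⟩ := hmem
    rw [dist_eq_norm] at hdy
    exact (hPz _ y hyt).trans hdy.le
  have hop : ‖T - P.comp T‖ ≤ ε := by
    refine ContinuousLinearMap.opNorm_le_bound _ hε.le fun z => ?_
    rcases eq_or_ne z 0 with rfl | hz0
    · simp
    · have hzn : (0:ℝ) < ‖z‖ := norm_pos_iff.mpr hz0
      have hunit : ‖(((‖z‖ : ℝ) : ℂ))⁻¹ • z‖ ≤ 1 := by
        rw [norm_smul]
        simp [norm_inv, hzn.ne']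
      have := hball _ hunit
      have hexp : (T - P.comp T) z = ((‖z‖ : ℝ) : ℂ) • (T (((‖z‖:ℝ):ℂ)⁻¹ • z) - P (T (((‖z‖:ℝ):ℂ)⁻¹ • z))) := by
        have hc : ((‖z‖:ℝ):ℂ) ≠ 0 := by exact_mod_cast hzn.ne'
        simp only [map_smul, smul_sub, ContinuousLinearMap.sub_apply,
          ContinuousLinearMap.comp_apply, smul_inv_smul₀ hc]
      rw [hexp, norm_smul]
      have hnc : ‖(((‖z‖:ℝ)):ℂ)‖ = ‖z‖ := by simp
      rw [hnc, mul_comm]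
      exact mul_le_mul_of_nonneg_right this hzn.le
  classical
  set bU := stdOrthonormalBasis ℂ U with hbU
  refine ⟨Module.finrank ℂ U, fun i => (bU i : H), fun i => (ContinuousLinearMap.adjoint T) (bU i), ?_⟩
  have hsum : P.comp T = ∑ i, (innerSL ℂ ((ContinuousLinearMap.adjoint T) (bU i))).smulRight ((bU i : H)) := by
    ext z
    simp only [ContinuousLinearMap.comp_apply, ContinuousLinearMap.sum_apply,
      ContinuousLinearMap.smulRight_apply, innerSL_apply_apply, hP, Submodule.subtypeL_apply]
    rw [bU.orthogonalProjectionOnto_apply_eq_sum]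
    push_cast [Submodule.coe_sum]
    refine Finset.sum_congr rfl fun i _ => ?_
    rw [ContinuousLinearMap.adjoint_inner_left]
  rw [← hsum]
  exact hop


open scoped InnerProductSpace in
/-- If the kernel of `π` is contained in the kernel of `ρ` and `A` is liminal, then the kernels
agree. -/
lemma CStarRep.ker_subset_ker_symm {A : Type u} [NonUnitalCStarAlgebra A] (hA : IsLiminal A)
    {π ρ : CStarRep A} (hπ : π.IsIrreducible) (hρ : ρ.IsIrreducible)
    (h : π.ker ⊆ ρ.ker) : ρ.ker ⊆ π.ker := by
  intro a ha
  simp only [CStarRep.ker, Set.mem_setOf_eq] at ha ⊢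
  by_contra h0
  have hπrange := hA π hπ
  obtain ⟨v₀, hv₀⟩ : ∃ v, π.toFun a v ≠ 0 := by
    by_contra h'; push_neg at h'
    exact h0 (ContinuousLinearMap.ext fun v => by simpa using h' v)
  haveI : Nontrivial π.carrier := ⟨⟨_, 0, hv₀⟩⟩
  obtain ⟨b₀, hb₀⟩ : ∃ b₀, ρ.toFun b₀ ≠ 0 := by
    by_contra h'; push_neg at h'
    exact hρ.1 (DFunLike.ext _ _ fun b => by simp [h' b])
  obtain ⟨ξ₀, hξ₀⟩ : ∃ ξ, ρ.toFun b₀ ξ ≠ 0 := by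
    by_contra h'; push_neg at h'
    exact hb₀ (ContinuousLinearMap.ext fun ξ => by simpa using h' ξ)
  haveI : Nontrivial ρ.carrier := ⟨⟨_, 0, hξ₀⟩⟩
  -- every rank-one operator on `π.carrier` has a preimage killed by `ρ`
  have hJ : ∀ u w : π.carrier, ∃ x : A,
      π.toFun x = (innerSL ℂ w).smulRight u ∧ ρ.toFun x = 0 := by
    intro u w
    set ζ := π.toFun a v₀ with hζ
    have hζ0 : ζ ≠ 0 := hv₀
    have hmem1 : ((innerSL ℂ ζ).smulRight u : π.carrier →L[ℂ] π.carrier)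
        ∈ Set.range ⇑π.toFun := by
      rw [hπrange]; exact rankOne_isCompactOperator_s11 u ζ
    have hmem2 : ((innerSL ℂ w).smulRight v₀ : π.carrier →L[ℂ] π.carrier)
        ∈ Set.range ⇑π.toFun := by
      rw [hπrange]; exact rankOne_isCompactOperator_s11 v₀ w
    obtain ⟨b₁, hb₁⟩ := hmem1
    obtain ⟨c₁, hc₁⟩ := hmem2
    have hζc : ((‖ζ‖ : ℂ)) ≠ 0 := by exact_mod_cast norm_ne_zero_iff.mpr hζ0
    have hnz : ((‖ζ‖ : ℂ) ^ 2) ≠ 0 := pow_ne_zero 2 hζc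
    refine ⟨(((‖ζ‖ : ℂ) ^ 2)⁻¹) • (b₁ * (a * c₁)), ?_, ?_⟩
    · ext z
      simp only [map_smul, map_mul, ContinuousLinearMap.smul_apply,
        ContinuousLinearMap.mul_apply, hb₁, hc₁, ContinuousLinearMap.smulRight_apply,
        innerSL_apply_apply]
      rw [← hζ, inner_self_eq_norm_sq_to_K, smul_smul, smul_smul]
      congr 1
      field_simp
      exact (mul_comm _ _).trans rfl
    · rw [map_smul, map_mul, map_mul, ha]
      simp
  have hnormle := norm_le_of_ker_le' π ρ (fun y hy => h hy)
  have hzero : ∀ b : A, ρ.toFun b = 0 := by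
    intro b
    have hcb : IsCompactOperator ⇑(π.toFun b) := by
      have hb : π.toFun b ∈ Set.range ⇑π.toFun := ⟨b, rfl⟩
      rwa [hπrange] at hb
    have hle : ∀ ε : ℝ, 0 < ε → ‖ρ.toFun b‖ ≤ ε := by
      intro ε hε
      obtain ⟨n, u, v, hop⟩ := exists_finrank_approx' (π.toFun b) hcb hε
      choose xs hxs1 hxs2 using fun i : Fin n => hJ (u i) (v i)
      have hπy : π.toFun (∑ i, xs i) = ∑ i, (innerSL ℂ (v i)).smulRight (u i) := by
        rw [map_sum]; exact Finset.sum_congr rfl fun i _ => hxs1 i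
      have hρy : ρ.toFun (∑ i, xs i) = 0 := by
        rw [map_sum]
        exact Finset.sum_eq_zero fun i _ => hxs2 i
      calc ‖ρ.toFun b‖ = ‖ρ.toFun (b - ∑ i, xs i)‖ := by rw [map_sub, hρy, sub_zero]
        _ ≤ ‖π.toFun (b - ∑ i, xs i)‖ := hnormle _
        _ = ‖π.toFun b - ∑ i, (innerSL ℂ (v i)).smulRight (u i)‖ := by rw [map_sub, hπy]
        _ ≤ ε := hop
    by_contra hb0
    have hpos : 0 < ‖ρ.toFun b‖ := norm_pos_iff.mpr hb0
    have := hle (‖ρ.toFun b‖ / 2) (by linarith)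
    linarith
  exact hρ.1 (DFunLike.ext _ _ fun b => by simp [hzero b])

/-- If `A` is a liminal C⋆-algebra, then the primitive ideal space `Prim(A)`
with the hull-kernel topology is a T₁-space. -/
theorem primSpace_t1Space_of_isLiminal {A : Type u} [NonUnitalCStarAlgebra A]
    (hA : IsLiminal A) : T1Space (PrimSpace A) := by
  refine ⟨fun P => ?_⟩
  rw [← isOpen_compl_iff]
  have hset : ({P} : Set (PrimSpace A))ᶜ = {Q : PrimSpace A | ¬ P.1 ⊆ Q.1} := by
    ext Q
    simp only [Set.mem_compl_iff, Set.mem_singleton_iff, Set.mem_setOf_eq]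
    constructor
    · intro hQ hPQ
      apply hQ
      obtain ⟨π, hπ, hπk⟩ := P.2
      obtain ⟨ρ, hρ, hρk⟩ := Q.2
      have h1 : π.ker ⊆ ρ.ker := by rw [hπk, hρk]; exact hPQ
      have h2 := CStarRep.ker_subset_ker_symm hA hπ hρ h1
      apply Subtype.ext
      rw [← hπk, ← hρk]
      exact Set.Subset.antisymm h2 h1
    · intro hn hQP
      subst hQP
      exact hn subset_rfl
  rw [hset]
  exact TopologicalSpace.isOpen_generateFrom_of_mem ⟨P.1, rfl⟩
end

section
/- Let A be a postliminal C*-algebra. If π₁ and π₂ are irreducible *-representations of A with the same kernel, then π₁ and π₂ are unitarily equivalent. -/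
universe u

/-- A C⋆-algebra is postliminal if every irreducible representation contains the compact
operators in its range: `K(H) ⊆ π(A)`. -/
def IsPostliminal (A : Type u) [NonUnitalCStarAlgebra A] : Prop :=
  ∀ π : CStarRep A, π.IsIrreducible →
    ∀ T : π.carrier →L[ℂ] π.carrier, IsCompactOperator T → T ∈ Set.range ⇑π.toFun

/-- Evaluation of a representation at a fixed vector, as a linear map. -/
noncomputable def CStarRep.evalₗ {A : Type u} [NonUnitalCStarAlgebra A] (π : CStarRep A)
    (ξ : π.carrier) : A →ₗ[ℂ] π.carrier where
  toFun a := π.toFun a ξ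
  map_add' a b := by simp [map_add]
  map_smul' c a := by simp [map_smul]

theorem CStarRep.dense_range_evalₗ {A : Type u} [NonUnitalCStarAlgebra A] (π : CStarRep A)
    (h : π.IsIrreducible) (ξ : π.carrier) (hξ : ξ ≠ 0) :
    Dense ((LinearMap.range (π.evalₗ ξ) : Submodule ℂ π.carrier) : Set π.carrier) := by
  set S : Submodule ℂ π.carrier := LinearMap.range (π.evalₗ ξ) with hS
  set K : Submodule ℂ π.carrier := S.topologicalClosure with hK
  have hKclosed : IsClosed (K : Set π.carrier) := S.isClosed_topologicalClosure
  have hKinv : ∀ a : A, ∀ x ∈ K, π.toFun a x ∈ K := by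
    intro a x hx
    have hmapsto : Set.MapsTo (π.toFun a) (S : Set π.carrier) (S : Set π.carrier) := by
      rintro - ⟨b, rfl⟩
      exact ⟨a * b, by simp [CStarRep.evalₗ, map_mul]⟩
    have := hmapsto.closure (π.toFun a).continuous
    exact this hx
  rcases h.2 K hKclosed hKinv with hbot | htop
  · exfalso
    have hSbot : ∀ a : A, π.toFun a ξ = 0 := by
      intro a
      have : π.toFun a ξ ∈ K := S.le_topologicalClosure ⟨a, rfl⟩
      rw [hbot] at this
      simpa using this
    set N : Submodule ℂ π.carrier := ⨅ a : A, LinearMap.ker (π.toFun a : π.carrier →ₗ[ℂ] π.carrier) with hN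
    have hNclosed : IsClosed (N : Set π.carrier) := by
      have : (N : Set π.carrier) = ⋂ a : A, (LinearMap.ker (π.toFun a : π.carrier →ₗ[ℂ] π.carrier) : Set π.carrier) := by
        simp [hN, Submodule.coe_iInf]
      rw [this]
      exact isClosed_iInter fun a => ContinuousLinearMap.isClosed_ker (π.toFun a)
    have hNinv : ∀ a : A, ∀ x ∈ N, π.toFun a x ∈ N := by
      intro a x hx
      rw [Submodule.mem_iInf] at hx ⊢
      intro b
      have := hx (b * a)
      simpa [map_mul] using this
    rcases h.2 N hNclosed hNinv with hNbot | hNtop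
    · have : ξ ∈ N := by
        rw [Submodule.mem_iInf]; intro a; simpa using hSbot a
      rw [hNbot] at this
      exact hξ (by simpa using this)
    · apply h.1
      ext a x
      have : x ∈ N := hNtop ▸ Submodule.mem_top
      rw [Submodule.mem_iInf] at this
      simpa using this a
  · have hcl : closure (S : Set π.carrier) = Set.univ := by
      have : (K : Set π.carrier) = Set.univ := by rw [htop]; rfl
      rw [← this]; rfl
    rw [Dense]; intro x
    rw [hcl]; trivial

theorem isCompactOperator_rankOne {H : Type*} [NormedAddCommGroup H] [InnerProductSpace ℂ H]
    (ξ η : H) : IsCompactOperator (fun x : H => (inner ℂ ξ x : ℂ) • η) := by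
  rw [isCompactOperator_iff_exists_mem_nhds_image_subset_compact]
  refine ⟨Metric.ball (0 : H) 1, Metric.ball_mem_nhds _ one_pos,
    (fun c : ℂ => c • η) '' Metric.closedBall 0 ‖ξ‖, ?_, ?_⟩
  · exact (isCompact_closedBall _ _).image (continuous_id.smul continuous_const)
  · rintro - ⟨x, hx, rfl⟩
    refine ⟨inner ℂ ξ x, ?_, rfl⟩
    rw [Metric.mem_closedBall, dist_zero_right]
    calc ‖(inner ℂ ξ x : ℂ)‖ ≤ ‖ξ‖ * ‖x‖ := norm_inner_le_norm ξ x
      _ ≤ ‖ξ‖ * 1 := by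
          exact mul_le_mul_of_nonneg_left (le_of_lt (by simpa [dist_zero_right] using hx))
            (norm_nonneg _)
      _ = ‖ξ‖ := mul_one _

set_option maxHeartbeats 2000000 in
/-- Let `A` be a postliminal C⋆-algebra.  If `π₁` and `π₂` are irreducible
`⋆`-representations of `A` with the same kernel, then they are unitarily equivalent: there is a
unitary `U : H₁ → H₂` with `U π₁(a) U⁻¹ = π₂(a)` for all `a ∈ A`. -/
theorem unitarilyEquivalent_of_ker_eq_of_isPostliminal {A : Type u} [NonUnitalCStarAlgebra A]
    (hA : IsPostliminal A) (π₁ π₂ : CStarRep A)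
    (h₁ : π₁.IsIrreducible) (h₂ : π₂.IsIrreducible) (hker : π₁.ker = π₂.ker) :
    ∃ U : π₁.carrier ≃ₗᵢ[ℂ] π₂.carrier,
      ∀ (a : A) (x : π₁.carrier), U (π₁.toFun a x) = π₂.toFun a (U x) := by
  classical
  -- a unit vector ξ in H₁
  obtain ⟨a₀, ha₀⟩ : ∃ a : A, π₁.toFun a ≠ 0 := by
    by_contra h
    push_neg at h
    exact h₁.1 (by ext a x; simp [h a])
  obtain ⟨x₀, hx₀⟩ : ∃ x : π₁.carrier, π₁.toFun a₀ x ≠ 0 := by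
    by_contra h
    push_neg at h
    exact ha₀ (by ext x; simp [h x])
  set ξ0 : π₁.carrier := π₁.toFun a₀ x₀ with hξ0
  have hξ0ne : ξ0 ≠ 0 := hx₀
  set ξ : π₁.carrier := ‖ξ0‖⁻¹ • ξ0 with hξdef
  have hξnorm : ‖ξ‖ = 1 := by
    rw [hξdef, norm_smul]
    simp [norm_inv, inv_mul_cancel₀ (norm_ne_zero_iff.mpr hξ0ne)]
  have hξne : ξ ≠ 0 := by
    intro h; rw [h] at hξnorm; simp at hξnorm
  have hξinner : (inner ℂ ξ ξ : ℂ) = 1 := by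
    rw [inner_self_eq_norm_sq_to_K, hξnorm]; norm_num
  -- the rank-one projection p = |ξ⟩⟨ξ|
  set p : π₁.carrier →L[ℂ] π₁.carrier := (innerSL ℂ ξ).smulRight ξ with hpdef
  have hp_apply : ∀ x, p x = (inner ℂ ξ x : ℂ) • ξ := fun x => rfl
  have hp_compact : IsCompactOperator ⇑p := by
    have := isCompactOperator_rankOne ξ ξ
    convert this using 1
    exact funext hp_apply
  obtain ⟨e, he⟩ : ∃ e : A, π₁.toFun e = p := hA π₁ h₁ p hp_compact
  -- matrix-coefficient function
  set f : A → ℂ := fun a => inner ℂ ξ (π₁.toFun a ξ) with hfdef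
  have hpξ : p ξ = ξ := by rw [hp_apply, hξinner, one_smul]
  -- p ∘ π₁(a) ∘ p = f a • p
  have hcomp₁ : ∀ a : A, π₁.toFun (e * a * e) = f a • p := by
    intro a
    rw [map_mul, map_mul, he]
    ext x
    simp only [ContinuousLinearMap.mul_apply, ContinuousLinearMap.smul_apply, hp_apply,
      map_smul, inner_smul_right, smul_smul]
    ring_nf
    rfl
  -- star e and e * e act like e under π₁
  have hstar₁ : π₁.toFun (star e) = π₁.toFun e := by
    rw [map_star, he, ContinuousLinearMap.star_eq_adjoint]
    refine ((ContinuousLinearMap.eq_adjoint_iff p p).mpr ?_).symm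
    intro x y
    simp only [hp_apply, inner_smul_left, inner_smul_right, inner_conj_symm]
    ring
  have hsq₁ : π₁.toFun (e * e) = π₁.toFun e := by
    rw [map_mul, he]
    ext x
    simp [ContinuousLinearMap.mul_apply, hp_apply, inner_smul_right, hξinner, smul_smul, hξnorm]
  -- transfer equalities through the common kernel
  have transfer : ∀ a b : A, π₁.toFun a = π₁.toFun b → π₂.toFun a = π₂.toFun b := by
    intro a b hab
    have hmem : a - b ∈ π₁.ker := by
      simp only [CStarRep.ker, Set.mem_setOf_eq, map_sub, hab, sub_self]
    rw [hker] at hmem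
    have : π₂.toFun (a - b) = 0 := hmem
    rw [map_sub, sub_eq_zero] at this
    exact this
  set q : π₂.carrier →L[ℂ] π₂.carrier := π₂.toFun e with hqdef
  have hq2 : q * q = q := by
    have := transfer (e * e) e hsq₁
    rw [map_mul] at this
    exact this
  have hqstar : star q = q := by
    have := transfer (star e) e hstar₁
    rw [map_star] at this
    exact this
  have hqcomp : ∀ a : A, π₂.toFun (e * a * e) = f a • q := by
    intro a
    have h1 : π₁.toFun (e * a * e) = π₁.toFun (f a • e) := by
      rw [map_smul, he, hcomp₁]
    have := transfer _ _ h1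
    rw [map_smul] at this
    exact this
  have hq0 : q ≠ 0 := by
    intro h
    have hmem : e ∈ π₂.ker := h
    rw [← hker] at hmem
    have : π₁.toFun e = 0 := hmem
    rw [he] at this
    apply hξne
    rw [← hpξ, this]
    rfl
  -- a unit vector η in H₂ with q η = η
  obtain ⟨y, hy⟩ : ∃ y : π₂.carrier, q y ≠ 0 := by
    by_contra h
    push_neg at h
    exact hq0 (by ext y; simp [h y])
  set η0 : π₂.carrier := q y with hη0def
  have hqη0 : q η0 = η0 := by
    have := ContinuousLinearMap.ext_iff.mp hq2 y
    simpa [ContinuousLinearMap.mul_apply] using this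
  set η : π₂.carrier := ‖η0‖⁻¹ • η0 with hηdef
  have hηnorm : ‖η‖ = 1 := by
    rw [hηdef, norm_smul]
    simp [norm_inv, inv_mul_cancel₀ (norm_ne_zero_iff.mpr hy)]
  have hηne : η ≠ 0 := by
    intro h; rw [h] at hηnorm; simp at hηnorm
  have hqη : q η = η := by
    rw [hηdef, ContinuousLinearMap.map_smul_of_tower, hqη0]
  have hηinner : (inner ℂ η η : ℂ) = 1 := by
    rw [inner_self_eq_norm_sq_to_K, hηnorm]; norm_num
  -- self-adjointness of q on inner products
  have hadj_q : ∀ u v : π₂.carrier, (inner ℂ (q u) v : ℂ) = inner ℂ u (q v) := by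
    intro u v
    have : ContinuousLinearMap.adjoint q = q := by
      rw [← ContinuousLinearMap.star_eq_adjoint, hqstar]
    conv_rhs => rw [← this]
    rw [ContinuousLinearMap.adjoint_inner_right]
  -- compressions
  have hqπq : ∀ a : A, q (π₂.toFun a η) = f a • η := by
    intro a
    have h1 := hqcomp a
    rw [map_mul, map_mul, ← hqdef] at h1
    have h2 := ContinuousLinearMap.ext_iff.mp h1 η
    simp only [ContinuousLinearMap.mul_apply, ContinuousLinearMap.smul_apply, hqη] at h2
    exact h2
  have hpπp : ∀ a : A, p (π₁.toFun a ξ) = f a • ξ := by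
    intro a
    have h1 := hcomp₁ a
    rw [map_mul, map_mul, he] at h1
    have h2 := ContinuousLinearMap.ext_iff.mp h1 ξ
    simp only [ContinuousLinearMap.mul_apply, ContinuousLinearMap.smul_apply, hpξ] at h2
    exact h2
  -- matrix coefficients agree
  have hfη : ∀ a : A, (inner ℂ η (π₂.toFun a η) : ℂ) = f a := by
    intro a
    calc (inner ℂ η (π₂.toFun a η) : ℂ) = inner ℂ (q η) (π₂.toFun a η) := by rw [hqη]
      _ = inner ℂ η (q (π₂.toFun a η)) := hadj_q η _
      _ = inner ℂ η (f a • η) := by rw [hqπq]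
      _ = f a * inner ℂ η η := inner_smul_right _ _ _
      _ = f a := by rw [hηinner, mul_one]
  have hfξ : ∀ a : A, (inner ℂ ξ (π₁.toFun a ξ) : ℂ) = f a := fun a => rfl
  -- the key norm identity
  have hnorm_eq : ∀ a : A, ‖π₂.toFun a η‖ = ‖π₁.toFun a ξ‖ := by
    intro a
    have hπ₂ : (inner ℂ (π₂.toFun a η) (π₂.toFun a η) : ℂ) = f (star a * a) := by
      rw [← hfη (star a * a)]
      rw [map_mul, map_star]
      simp only [ContinuousLinearMap.mul_apply]
      rw [ContinuousLinearMap.star_eq_adjoint, ContinuousLinearMap.adjoint_inner_right]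
    have hπ₁ : (inner ℂ (π₁.toFun a ξ) (π₁.toFun a ξ) : ℂ) = f (star a * a) := by
      rw [← hfξ (star a * a)]
      rw [map_mul, map_star]
      simp only [ContinuousLinearMap.mul_apply]
      rw [ContinuousLinearMap.star_eq_adjoint, ContinuousLinearMap.adjoint_inner_right]
    have h2 : (inner ℂ (π₂.toFun a η) (π₂.toFun a η) : ℂ)
        = inner ℂ (π₁.toFun a ξ) (π₁.toFun a ξ) := hπ₂.trans hπ₁.symm
    rw [inner_self_eq_norm_sq_to_K, inner_self_eq_norm_sq_to_K] at h2
    have h3 : ‖π₂.toFun a η‖ ^ 2 = ‖π₁.toFun a ξ‖ ^ 2 := by exact_mod_cast h2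
    nlinarith [norm_nonneg (π₂.toFun a η), norm_nonneg (π₁.toFun a ξ)]
  -- the evaluation maps
  set T₁ : A →ₗ[ℂ] π₁.carrier := π₁.evalₗ ξ with hT₁def
  set T₂ : A →ₗ[ℂ] π₂.carrier := π₂.evalₗ η with hT₂def
  have hT₁app : ∀ a : A, T₁ a = π₁.toFun a ξ := fun a => rfl
  have hT₂app : ∀ a : A, T₂ a = π₂.toFun a η := fun a => rfl
  have hker_eq : LinearMap.ker T₁ ≤ LinearMap.ker T₂ := by
    intro a ha
    rw [LinearMap.mem_ker] at ha ⊢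
    have := hnorm_eq a
    rw [← hT₁app, ← hT₂app, ha, norm_zero] at this
    exact norm_eq_zero.mp this
  -- the isometry on the dense orbit
  set U₀ : (LinearMap.range T₁) →ₗ[ℂ] π₂.carrier :=
    ((LinearMap.ker T₁).liftQ T₂ hker_eq).comp
      (T₁.quotKerEquivRange.symm : (LinearMap.range T₁) →ₗ[ℂ] (A ⧸ LinearMap.ker T₁)) with hU₀def
  have hU₀app : ∀ a : A, U₀ ⟨T₁ a, LinearMap.mem_range_self _ a⟩ = T₂ a := by
    intro a
    have hsymm : T₁.quotKerEquivRange.symm ⟨T₁ a, LinearMap.mem_range_self _ a⟩ =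
        Submodule.Quotient.mk a := by
      rw [LinearMap.quotKerEquivRange_symm_apply_image, Submodule.mkQ_apply]
    simp only [hU₀def, LinearMap.comp_apply, LinearEquiv.coe_coe, hsymm,
      Submodule.liftQ_apply]
  have hU₀norm : ∀ x : LinearMap.range T₁, ‖U₀ x‖ = ‖x‖ := by
    rintro ⟨-, a, rfl⟩
    rw [hU₀app a]
    have := hnorm_eq a
    rw [← hT₁app, ← hT₂app] at this
    simpa using this
  set li : (LinearMap.range T₁) →ₗᵢ[ℂ] π₂.carrier := ⟨U₀, hU₀norm⟩ with hlidef
  -- density of the orbits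
  have hdense₁ : Dense ((LinearMap.range T₁ : Submodule ℂ π₁.carrier) : Set π₁.carrier) :=
    π₁.dense_range_evalₗ h₁ ξ hξne
  have hdense₂ : Dense ((LinearMap.range T₂ : Submodule ℂ π₂.carrier) : Set π₂.carrier) :=
    π₂.dense_range_evalₗ h₂ η hηne
  set e₁ : (LinearMap.range T₁) →L[ℂ] π₁.carrier := (LinearMap.range T₁).subtypeL with he₁def
  have h_dense : DenseRange ⇑e₁ := by
    have : Set.range ⇑e₁ = ((LinearMap.range T₁ : Submodule ℂ π₁.carrier) : Set π₁.carrier) :=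
      Subtype.range_coe
    rw [DenseRange, this]
    exact hdense₁
  have h_ue : IsUniformInducing ⇑e₁ := isUniformEmbedding_subtype_val.isUniformInducing
  set U₁ : π₁.carrier →L[ℂ] π₂.carrier :=
    li.toContinuousLinearMap.extend e₁ with hU₁def
  have hU₁T : ∀ a : A, U₁ (T₁ a) = T₂ a := by
    intro a
    have := ContinuousLinearMap.extend_eq li.toContinuousLinearMap h_dense h_ue
      ⟨T₁ a, LinearMap.mem_range_self _ a⟩
    rw [← hU₁def] at this
    have he₁a : e₁ ⟨T₁ a, LinearMap.mem_range_self _ a⟩ = T₁ a := rfl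
    rw [he₁a] at this
    rw [this]
    exact hU₀app a
  have hU₁norm : ∀ x : π₁.carrier, ‖U₁ x‖ = ‖x‖ := by
    have : (fun x : π₁.carrier => ‖U₁ x‖) = fun x => ‖x‖ := by
      refine Continuous.ext_on hdense₁ (U₁.continuous.norm) continuous_norm ?_
      rintro - ⟨a, rfl⟩
      show ‖U₁ (T₁ a)‖ = ‖T₁ a‖
      rw [hU₁T a]
      have := hnorm_eq a
      rw [← hT₁app, ← hT₂app] at this
      exact this
    exact fun x => congrFun this x
  set li₁ : π₁.carrier →ₗᵢ[ℂ] π₂.carrier := ⟨(U₁ : π₁.carrier →ₗ[ℂ] π₂.carrier), hU₁norm⟩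
    with hli₁def
  have hli₁app : ∀ x, li₁ x = U₁ x := fun x => rfl
  have hsurj : Function.Surjective ⇑li₁ := by
    have hclosed : IsClosed (Set.range ⇑li₁) :=
      (li₁.isometry.isClosedEmbedding).isClosed_range
    have hsub : ((LinearMap.range T₂ : Submodule ℂ π₂.carrier) : Set π₂.carrier)
        ⊆ Set.range ⇑li₁ := by
      rintro - ⟨a, rfl⟩
      exact ⟨T₁ a, by rw [hli₁app, hU₁T a]⟩
    have : Set.range ⇑li₁ = Set.univ := by
      have h1 : closure ((LinearMap.range T₂ : Submodule ℂ π₂.carrier) : Set π₂.carrier)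
          ⊆ Set.range ⇑li₁ := by
        rw [← hclosed.closure_eq]
        exact closure_mono hsub
      rw [hdense₂.closure_eq] at h1
      exact Set.eq_univ_of_univ_subset h1
    intro y
    have : y ∈ Set.range ⇑li₁ := this ▸ Set.mem_univ y
    exact this
  refine ⟨LinearIsometryEquiv.ofSurjective li₁ hsurj, ?_⟩
  intro a x
  have hcoe : ∀ z, (LinearIsometryEquiv.ofSurjective li₁ hsurj) z = U₁ z := fun z => rfl
  rw [hcoe, hcoe]
  have key : (fun x : π₁.carrier => U₁ (π₁.toFun a x))
      = fun x => π₂.toFun a (U₁ x) := by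
    refine Continuous.ext_on hdense₁ (U₁.continuous.comp (π₁.toFun a).continuous)
      ((π₂.toFun a).continuous.comp U₁.continuous) ?_
    rintro - ⟨b, rfl⟩
    have h1 : π₁.toFun a (T₁ b) = T₁ (a * b) := by
      rw [hT₁app, hT₁app, map_mul]; rfl
    have h2 : π₂.toFun a (T₂ b) = T₂ (a * b) := by
      rw [hT₂app, hT₂app, map_mul]; rfl
    show U₁ (π₁.toFun a (T₁ b)) = π₂.toFun a (U₁ (T₁ b))
    rw [h1, hU₁T, hU₁T, ← h2]
  exact congrFun key x
end

section
/- For a separable infinite-dimensional Hilbert space H, the set K(H) of all compact operators on H is the largest proper closed two-sided ideal in the C*-algebra B(H) of all bounded operators: every proper closed two-sided ideal of B(H) is contained in K(H). -/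
open ContinuousLinearMap Metric

noncomputable section CompactIdealAux

/-- An orthonormal family in a separable metric inner product space is countable. -/
lemma aux_countable_of_orthonormal {E : Type*} [NormedAddCommGroup E] [InnerProductSpace ℂ E]
    [TopologicalSpace.SeparableSpace E] {ι : Type*} {v : ι → E} (hv : Orthonormal ℂ v) :
    Countable ι := by
  obtain ⟨s, hs_count, hs_dense⟩ := TopologicalSpace.exists_countable_dense E
  have key : ∀ i : ι, ∃ c : E, c ∈ s ∧ dist (v i) c < 0.7 := fun i => by
    obtain ⟨c, hc, hd⟩ := hs_dense.exists_dist_lt (v i) (by norm_num : (0:ℝ) < 0.7)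
    exact ⟨c, hc, hd⟩
  choose c hc_mem hc_lt using key
  haveI : Countable s := hs_count.to_subtype
  have hdist : ∀ i j : ι, i ≠ j → (2:ℝ) ≤ dist (v i) (v j) ^ 2 := by
    intro i j hij
    have h1 : ‖v i‖ = 1 := hv.1 i
    have h2 : ‖v j‖ = 1 := hv.1 j
    have h3 : inner ℂ (v i) (v j) = (0 : ℂ) := hv.2 hij
    have := @norm_sub_sq ℂ _ _ _ _ (v i) (v j)
    rw [dist_eq_norm, this, h1, h2, h3]
    norm_num
  have hinj : Function.Injective (fun i => (⟨c i, hc_mem i⟩ : s)) := by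
    intro i j hij
    by_contra hne
    have h1 := hc_lt i
    have h2 := hc_lt j
    have hcc : c i = c j := congrArg Subtype.val hij
    have htri : dist (v i) (v j) ≤ dist (v i) (c i) + dist (c j) (v j) := by
      rw [hcc]; exact dist_triangle _ _ _
    rw [dist_comm (c j) (v j)] at htri
    have hlt : dist (v i) (v j) < 1.4 := by linarith
    have h2le := hdist i j hne
    nlinarith [dist_nonneg (x := v i) (y := v j)]
  exact hinj.countable

/-- From a separable Hilbert space into an infinite dimensional Hilbert space, there exists
a linear isometry. -/
lemma aux_exists_isometry (E F : Type*) [NormedAddCommGroup E] [InnerProductSpace ℂ E]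
    [CompleteSpace E] [TopologicalSpace.SeparableSpace E]
    [NormedAddCommGroup F] [InnerProductSpace ℂ F] [CompleteSpace F]
    (h : ¬ FiniteDimensional ℂ F) : Nonempty (E →ₗᵢ[ℂ] F) := by
  obtain ⟨w, b, hb⟩ := exists_hilbertBasis ℂ E
  obtain ⟨v, c, hc⟩ := exists_hilbertBasis ℂ F
  haveI : Countable w := aux_countable_of_orthonormal b.orthonormal
  haveI : Infinite v := by
    by_contra hfin
    haveI : Finite v := not_infinite_iff_finite.mp hfin
    haveI : Fintype v := Fintype.ofFinite v
    exact h (Module.Finite.of_basis c.toOrthonormalBasis.toBasis)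
  haveI : Encodable w := Encodable.ofCountable _
  let emb : w ↪ v := (Encodable.encode' w).trans (Infinite.natEmbedding v)
  have hu : Orthonormal ℂ (fun i : w => c (emb i)) :=
    c.orthonormal.comp emb emb.injective
  let Φ : lp (fun _ : w => ℂ) 2 →ₗᵢ[ℂ] F := hu.orthogonalFamily.linearIsometry
  exact ⟨Φ.comp b.repr.toLinearIsometry⟩

/-- A continuous linear map with finite dimensional range is a compact operator. -/
lemma aux_isCompactOperator_of_finiteDimRange {E : Type*} [NormedAddCommGroup E]
    [NormedSpace ℂ E] (G : E →L[ℂ] E)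
    (h : FiniteDimensional ℂ (LinearMap.range (G : E →ₗ[ℂ] E))) : IsCompactOperator ⇑G := by
  haveI := h
  set N := LinearMap.range (G : E →ₗ[ℂ] E) with hN
  let Gr : E →L[ℂ] N := G.codRestrict N (fun x => LinearMap.mem_range_self _ x)
  have hbdd : Bornology.IsBounded (⇑Gr '' closedBall 0 1) :=
    (Gr.lipschitz.isBounded_image (isBounded_closedBall))
  have hScompact : IsCompact (closure (⇑Gr '' closedBall 0 1)) := by
    haveI : ProperSpace N := FiniteDimensional.proper ℂ N
    exact hbdd.isCompact_closure
  refine ⟨Subtype.val '' closure (⇑Gr '' closedBall 0 1),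
    hScompact.image continuous_subtype_val, ?_⟩
  have hball : closedBall (0:E) 1 ⊆ ⇑G ⁻¹' (Subtype.val '' closure (⇑Gr '' closedBall 0 1)) := by
    intro x hx
    exact ⟨Gr x, subset_closure ⟨x, hx, rfl⟩, rfl⟩
  exact Filter.mem_of_superset (closedBall_mem_nhds 0 one_pos) hball

lemma aux_sqrt_mul_le {s a b : ℝ} (hs : 0 ≤ s) (ha : 0 ≤ a) (hb : 0 ≤ b)
    (h : s * a ^ 2 ≤ b ^ 2) : Real.sqrt s * a ≤ b := by
  calc Real.sqrt s * a = Real.sqrt (s * a ^ 2) := by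
        rw [Real.sqrt_mul hs, Real.sqrt_sq ha]
    _ ≤ Real.sqrt (b ^ 2) := Real.sqrt_le_sqrt h
    _ = b := Real.sqrt_sq hb

end CompactIdealAux

section KeyLemma

variable {H : Type*} [NormedAddCommGroup H] [InnerProductSpace ℂ H] [CompleteSpace H]
    [TopologicalSpace.SeparableSpace H]

local notation "⟪" x ", " y "⟫" => @inner ℂ _ _ x y

set_option maxHeartbeats 1000000 in
/-- Key lemma: a closed two-sided ideal containing a non-compact operator contains `1`. -/
lemma aux_one_mem_of_noncompact (J : TwoSidedIdeal (H →L[ℂ] H))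
    (hJcl : IsClosed (J : Set (H →L[ℂ] H))) {T : H →L[ℂ] H} (hT : T ∈ J)
    (hTnc : ¬ IsCompactOperator ⇑T) : (1 : H →L[ℂ] H) ∈ J := by
  classical
  set A : H →L[ℂ] H := ContinuousLinearMap.adjoint T * T with hA_def
  have hA_mem : A ∈ J := J.mul_mem_left _ _ hT
  have hA_nonneg : (0 : H →L[ℂ] H) ≤ A := by
    simpa [hA_def, ContinuousLinearMap.star_eq_adjoint] using star_mul_self_nonneg T
  have hA_sa : IsSelfAdjoint A := by
    simpa [hA_def, ContinuousLinearMap.star_eq_adjoint] using IsSelfAdjoint.star_mul_self T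
  have hspec : spectrum ℝ A ⊆ Set.Ici 0 := spectrum_nonneg_of_nonneg hA_nonneg
  -- the cut-off functions
  set f : ℝ → ℝ → ℝ := fun δ t => min 1 (max (2 * t / δ - 1) 0) with hf_def
  have hfc : ∀ δ, Continuous (f δ) := fun δ => by
    apply continuous_const.min
    exact (((continuous_const.mul continuous_id).div_const δ).sub continuous_const).max
      continuous_const
  have hf0 : ∀ δ t, 0 ≤ f δ t := fun δ t => le_min one_pos.le (le_max_right _ 0)
  have hf1 : ∀ δ t, f δ t ≤ 1 := fun δ t => min_le_left _ _
  have hf_cases : ∀ δ, 0 < δ → ∀ t, t < δ / 2 → f δ t = 0 := by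
    intro δ hδ t ht
    have h1 : 2 * t / δ - 1 ≤ 0 := by
      rw [sub_nonpos, div_le_one hδ]; linarith
    show min 1 (max (2 * t / δ - 1) 0) = 0
    rw [max_eq_right h1, min_eq_right zero_le_one]
  have hf_one : ∀ δ, 0 < δ → ∀ t, δ ≤ t → f δ t = 1 := by
    intro δ hδ t ht
    have h1 : (1:ℝ) ≤ 2 * t / δ - 1 := by
      rw [le_sub_iff_add_le, le_div_iff₀ hδ]; linarith
    show min 1 (max (2 * t / δ - 1) 0) = 1
    rw [max_eq_left (le_trans zero_le_one h1), min_eq_left h1]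
  have hFsa : ∀ δ : ℝ, IsSelfAdjoint (cfc (f δ) A) := fun δ => cfc_predicate (f δ) A
  have hF_adj : ∀ δ : ℝ, ContinuousLinearMap.adjoint (cfc (f δ) A) = cfc (f δ) A := fun δ => by
    rw [← ContinuousLinearMap.star_eq_adjoint]; exact (hFsa δ)
  have hF_move : ∀ (δ : ℝ) (z w : H), ⟪(cfc (f δ) A) z, w⟫ = ⟪z, (cfc (f δ) A) w⟫ := by
    intro δ z w
    conv_lhs => rw [← hF_adj δ]
    exact ContinuousLinearMap.adjoint_inner_left (cfc (f δ) A) w z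
  by_cases hED : ∃ δ : ℝ, 0 < δ ∧ ¬ FiniteDimensional ℂ (LinearMap.range ((cfc (f δ) A : H →L[ℂ] H) : H →ₗ[ℂ] H))
  · -- Case A: some spectral cut-off has infinite rank; build a one-sided inverse.
    obtain ⟨δ, hδ, hinf⟩ := hED
    set M : Submodule ℂ H := (LinearMap.range ((cfc (f δ) A : H →L[ℂ] H) : H →ₗ[ℂ] H)).topologicalClosure with hM_def
    have hM_closed : IsClosed (M : Set H) := Submodule.isClosed_topologicalClosure _
    haveI : CompleteSpace M := hM_closed.completeSpace_coe
    have hM_inf : ¬ FiniteDimensional ℂ M := by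
      intro hfin
      exact hinf (Submodule.finiteDimensional_of_le (Submodule.le_topologicalClosure _))
    -- lower bound on the range
    have hbound_range : ∀ y : H,
        δ / 2 * ‖cfc (f δ) A y‖ ^ 2 ≤ ‖T (cfc (f δ) A y)‖ ^ 2 := by
      intro y
      have hle : cfc (fun t => δ / 2 * (f δ t * f δ t)) A
          ≤ cfc (fun t => f δ t * (t * f δ t)) A := by
        refine cfc_mono (fun x hx => ?_)
          ((continuous_const.mul ((hfc δ).mul (hfc δ))).continuousOn)
          (((hfc δ).mul (continuous_id.mul (hfc δ))).continuousOn)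
        have hx0 : 0 ≤ x := hspec hx
        rcases lt_or_ge x (δ / 2) with h | h
        · rw [hf_cases δ hδ x h]; ring_nf; exact le_refl 0
        · nlinarith [hf0 δ x]
      have hc2 : cfc (fun t => δ / 2 * (f δ t * f δ t)) A
          = (δ/2) • (cfc (f δ) A * cfc (f δ) A) := by
        have h := cfc_const_mul (δ/2) (fun t => f δ t * f δ t) A
          (((hfc δ).mul (hfc δ)).continuousOn)
        rw [cfc_mul _ _ A ((hfc δ).continuousOn) ((hfc δ).continuousOn)] at h
        exact h
      have h2 : cfc (fun t : ℝ => t * f δ t) A = A * cfc (f δ) A := by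
        have h := cfc_mul (fun t : ℝ => t) (f δ) A continuous_id.continuousOn
          ((hfc δ).continuousOn)
        rw [cfc_id' ℝ A] at h
        exact h
      have hc1 : cfc (fun t => f δ t * (t * f δ t)) A
          = cfc (f δ) A * (A * cfc (f δ) A) := by
        have h := cfc_mul (f δ) (fun t : ℝ => t * f δ t) A ((hfc δ).continuousOn)
          ((continuous_id.mul (hfc δ)).continuousOn)
        rw [h2] at h
        exact h
      rw [hc2, hc1] at hle
      have hpos : (0 : H →L[ℂ] H)
          ≤ cfc (f δ) A * (A * cfc (f δ) A) - (δ/2) • (cfc (f δ) A * cfc (f δ) A) :=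
        sub_nonneg.mpr hle
      have hip := ((ContinuousLinearMap.nonneg_iff_isPositive _).mp hpos).re_inner_nonneg_left y
      have hre : RCLike.re ⟪(cfc (f δ) A * (A * cfc (f δ) A)
            - (δ/2) • (cfc (f δ) A * cfc (f δ) A)) y, y⟫
          = RCLike.re ⟪A (cfc (f δ) A y), cfc (f δ) A y⟫ - δ/2 * ‖cfc (f δ) A y‖ ^ 2 := by
        rw [ContinuousLinearMap.sub_apply, inner_sub_left, map_sub]
        congr 1
        · rw [ContinuousLinearMap.mul_apply, ContinuousLinearMap.mul_apply, hF_move]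
        · rw [ContinuousLinearMap.smul_apply, ContinuousLinearMap.mul_apply,
            RCLike.real_smul_eq_coe_smul (K := ℂ), inner_smul_left, RCLike.conj_ofReal,
            hF_move, RCLike.re_ofReal_mul, inner_self_eq_norm_sq (𝕜 := ℂ)]
      have hTnorm : RCLike.re ⟪A (cfc (f δ) A y), cfc (f δ) A y⟫
          = ‖T (cfc (f δ) A y)‖ ^ 2 := by
        rw [hA_def, ContinuousLinearMap.mul_apply, ContinuousLinearMap.adjoint_inner_left,
          inner_self_eq_norm_sq (𝕜 := ℂ)]
      rw [hre, hTnorm] at hip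
      linarith
    have hbound : ∀ x ∈ M, δ / 2 * ‖x‖ ^ 2 ≤ ‖T x‖ ^ 2 := by
      have hsub : (M : Set H) ⊆ {x : H | δ / 2 * ‖x‖ ^ 2 ≤ ‖T x‖ ^ 2} := by
        rw [hM_def, Submodule.topologicalClosure_coe]
        apply closure_minimal
        · rintro x ⟨y, rfl⟩
          exact hbound_range y
        · apply isClosed_le
          · exact (continuous_const.mul ((continuous_norm).pow 2))
          · exact (T.continuous.norm.pow 2)
      exact fun x hx => hsub hx
    -- isometry into M
    obtain ⟨V⟩ := aux_exists_isometry H M hM_inf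
    set u : H →L[ℂ] H := M.subtypeL.comp V.toContinuousLinearMap with hu_def
    have hu_mem : ∀ x, u x ∈ M := fun x => (V x).2
    have hu_norm : ∀ x, ‖u x‖ = ‖x‖ := fun x => V.norm_map x
    set C : H →L[ℂ] H := T * u with hC_def
    have hsq : 0 < Real.sqrt (δ/2) := Real.sqrt_pos.mpr (by linarith)
    have h_lb : ∀ x, Real.sqrt (δ/2) * ‖x‖ ≤ ‖C x‖ := by
      intro x
      have h1 := hbound (u x) (hu_mem x)
      rw [hu_norm x] at h1
      exact aux_sqrt_mul_le (by linarith) (norm_nonneg x) (norm_nonneg _)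
        (by simpa [hC_def, ContinuousLinearMap.mul_apply] using h1)
    have hK : ∀ x, ‖x‖ ≤ Real.toNNReal ((Real.sqrt (δ/2))⁻¹) * ‖C x‖ := by
      intro x
      rw [Real.coe_toNNReal _ (inv_nonneg.mpr hsq.le), inv_mul_eq_div, le_div_iff₀ hsq, mul_comm]
      exact h_lb x
    have hC_anti := ContinuousLinearMap.antilipschitz_of_bound C hK
    have hC_inj : Function.Injective ⇑C := hC_anti.injective
    have hC_closedRange : IsClosed (Set.range ⇑C) :=
      hC_anti.isClosed_range C.uniformContinuous
    set N : Submodule ℂ H := LinearMap.range (C : H →ₗ[ℂ] H) with hNsub_def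
    have hN_closed : IsClosed (N : Set H) := by
      have : (N : Set H) = Set.range ⇑C := by
        ext x; simp [hNsub_def, LinearMap.mem_range, Set.mem_range]
      rw [this]; exact hC_closedRange
    haveI : CompleteSpace N := hN_closed.completeSpace_coe
    set Ccod : H →L[ℂ] N := C.codRestrict N (fun x => LinearMap.mem_range_self _ x) with hCcod
    have hker : LinearMap.ker (Ccod : H →ₗ[ℂ] N) = ⊥ := by
      rw [ContinuousLinearMap.ker_codRestrict]
      exact LinearMap.ker_eq_bot.mpr hC_inj
    have hrange : LinearMap.range (Ccod : H →ₗ[ℂ] N) = ⊤ := by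
      rw [LinearMap.range_eq_top]
      rintro ⟨y, hy⟩
      obtain ⟨x, hx⟩ := hy
      exact ⟨x, Subtype.ext hx⟩
    set e : H ≃L[ℂ] N := ContinuousLinearEquiv.ofBijective Ccod hker hrange with he
    set B : H →L[ℂ] H := (e.symm : N →L[ℂ] H).comp (Submodule.orthogonalProjection N) with hB
    have h_one : B * C = 1 := by
      ext x
      have hmem : C x ∈ N := LinearMap.mem_range_self _ x
      have hproj : Submodule.orthogonalProjection N (C x) = ⟨C x, hmem⟩ := by
        exact Submodule.orthogonalProjection_mem_subspace_eq_self (⟨C x, hmem⟩ : N)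
      have hCcodx : Ccod x = ⟨C x, hmem⟩ := Subtype.ext rfl
      calc (B * C) x = e.symm (Submodule.orthogonalProjection N (C x)) := rfl
        _ = e.symm (Ccod x) := by rw [hproj, hCcodx]
        _ = x := ContinuousLinearEquiv.ofBijective_symm_apply_apply Ccod hker hrange x
        _ = (1 : H →L[ℂ] H) x := rfl
    have : (1 : H →L[ℂ] H) = (B * T) * u := by
      rw [mul_assoc, ← hC_def, h_one]
    rw [this]
    exact J.mul_mem_right _ _ (J.mul_mem_left _ _ hT)
  · -- Case B: all cut-offs are finite rank, so T is compact — contradiction.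
    exfalso
    push_neg at hED
    apply hTnc
    have hcompact : ∀ n : ℕ, IsCompactOperator ⇑(T * cfc (f (1/(n+1))) A) := by
      intro n
      have hδn : (0:ℝ) < 1/(n+1) := by positivity
      haveI hfd := hED (1/(n+1)) hδn
      apply aux_isCompactOperator_of_finiteDimRange
      have hle : LinearMap.range ((T * cfc (f (1/(n+1))) A : H →L[ℂ] H) : H →ₗ[ℂ] H)
          ≤ (LinearMap.range ((cfc (f (1/(n+1))) A : H →L[ℂ] H) : H →ₗ[ℂ] H)).map (T : H →ₗ[ℂ] H) := by
        rintro x ⟨y, rfl⟩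
        exact Submodule.mem_map_of_mem (LinearMap.mem_range_self _ y)
      haveI : FiniteDimensional ℂ
          ((LinearMap.range ((cfc (f (1/(n+1))) A : H →L[ℂ] H) : H →ₗ[ℂ] H)).map (T : H →ₗ[ℂ] H)) :=
        Module.Finite.map _ _
      exact Submodule.finiteDimensional_of_le hle
    have hnorm_bound : ∀ δ : ℝ, 0 < δ → ‖T - T * cfc (f δ) A‖ ≤ Real.sqrt δ := by
      intro δ hδ
      set S : H →L[ℂ] H := T * (1 - cfc (f δ) A) with hS
      have hTS : T - T * cfc (f δ) A = S := by rw [hS, mul_sub, mul_one]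
      have hone_sub : (1 : H →L[ℂ] H) - cfc (f δ) A = cfc (fun t => 1 - f δ t) A := by
        rw [cfc_sub _ _ A continuous_const.continuousOn ((hfc δ).continuousOn),
          cfc_const_one ℝ A]
      have hsa1 : star ((1 : H →L[ℂ] H) - cfc (f δ) A) = 1 - cfc (f δ) A :=
        ((IsSelfAdjoint.one (H →L[ℂ] H)).sub (hFsa δ))
      have hstar : star S * S = (1 - cfc (f δ) A) * (A * (1 - cfc (f δ) A)) := by
        rw [hS, star_mul, hsa1, ContinuousLinearMap.star_eq_adjoint, hA_def]
        noncomm_ring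
      have h2 : cfc (fun t : ℝ => t * (1 - f δ t)) A = A * (1 - cfc (f δ) A) := by
        have h := cfc_mul (fun t : ℝ => t) (fun t => 1 - f δ t) A
          continuous_id.continuousOn ((continuous_const.sub (hfc δ)).continuousOn)
        rw [cfc_id' ℝ A, ← hone_sub] at h
        exact h
      have hcfc3 : cfc (fun t => (1 - f δ t) * (t * (1 - f δ t))) A
          = (1 - cfc (f δ) A) * (A * (1 - cfc (f δ) A)) := by
        have h := cfc_mul (fun t => 1 - f δ t) (fun t : ℝ => t * (1 - f δ t)) A
          ((continuous_const.sub (hfc δ)).continuousOn)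
          ((continuous_id.mul (continuous_const.sub (hfc δ))).continuousOn)
        rw [h2, ← hone_sub] at h
        exact h
      have hnorm_cfc : ‖cfc (fun t => (1 - f δ t) * (t * (1 - f δ t))) A‖ ≤ δ := by
        apply norm_cfc_le hδ.le
        intro x hx
        have hx0 : 0 ≤ x := hspec hx
        have h1 : 0 ≤ 1 - f δ x := by linarith [hf1 δ x]
        have hval : (1 - f δ x) * (x * (1 - f δ x)) ≤ δ := by
          rcases le_or_gt δ x with h | h
          · rw [hf_one δ hδ x h]; simp [hδ.le]
          · have e1 : (1 - f δ x) * (1 - f δ x) ≤ 1 := by nlinarith [hf0 δ x]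
            have e2 := mul_le_mul_of_nonneg_left e1 hx0
            nlinarith [e2]
        have hnn : 0 ≤ (1 - f δ x) * (x * (1 - f δ x)) := by positivity
        rw [Real.norm_eq_abs, abs_of_nonneg hnn]
        exact hval
      have hsq : ‖S‖ ^ 2 ≤ δ := by
        have h1 : ‖S‖ * ‖S‖ = ‖cfc (fun t => (1 - f δ t) * (t * (1 - f δ t))) A‖ := by
          rw [← CStarRing.norm_star_mul_self, hstar, hcfc3]
        nlinarith [hnorm_cfc]
      rw [hTS]
      calc ‖S‖ = Real.sqrt (‖S‖ ^ 2) := (Real.sqrt_sq (norm_nonneg S)).symm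
        _ ≤ Real.sqrt δ := Real.sqrt_le_sqrt hsq
    have htend : Filter.Tendsto (fun n : ℕ => T * cfc (f (1/(n+1))) A)
        Filter.atTop (nhds T) := by
      rw [tendsto_iff_norm_sub_tendsto_zero]
      apply squeeze_zero (fun n => norm_nonneg _) (fun n => ?_)
      · have h0 : Filter.Tendsto (fun n : ℕ => (1:ℝ)/(n+1)) Filter.atTop (nhds 0) :=
          tendsto_one_div_add_atTop_nhds_zero_nat
        have h1 : Filter.Tendsto (fun n : ℕ => Real.sqrt (1/(n+1))) Filter.atTop
            (nhds (Real.sqrt 0)) := (Real.continuous_sqrt.tendsto 0).comp h0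
        rw [Real.sqrt_zero] at h1
        exact h1
      · rw [norm_sub_rev]
        exact hnorm_bound (1/(n+1)) (by positivity)
    exact isCompactOperator_of_tendsto htend (Filter.Eventually.of_forall hcompact)

end KeyLemma

/-- For a separable infinite-dimensional Hilbert space `H`, the compact
operators `K(H)` form the largest proper closed two-sided ideal of `B(H)`: they form a proper
closed two-sided ideal, and every proper closed two-sided ideal of `B(H)` consists of compact
operators. -/
theorem compactOperators_largest_properClosedTwoSidedIdeal
    {H : Type*} [NormedAddCommGroup H] [InnerProductSpace ℂ H] [CompleteSpace H]
    [TopologicalSpace.SeparableSpace H] (h_infdim : ¬ FiniteDimensional ℂ H) :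
    (∃ K : TwoSidedIdeal (H →L[ℂ] H),
        (K : Set (H →L[ℂ] H)) = {T : H →L[ℂ] H | IsCompactOperator T} ∧
        IsClosed (K : Set (H →L[ℂ] H)) ∧ K ≠ ⊤) ∧
      ∀ J : TwoSidedIdeal (H →L[ℂ] H),
        IsClosed (J : Set (H →L[ℂ] H)) → J ≠ ⊤ →
        ∀ T ∈ J, IsCompactOperator T := by
  constructor
  · -- the ideal of compact operators
    refine ⟨TwoSidedIdeal.mk' {T : H →L[ℂ] H | IsCompactOperator ⇑T}
      (by simpa using (isCompactOperator_zero : IsCompactOperator (fun _ : H => (0:H))))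
      (fun {x y} hx hy => by simpa using hx.add hy)
      (fun {x} hx => by simpa using hx.neg)
      (fun {x y} hy => by
        simpa [ContinuousLinearMap.mul_def, ContinuousLinearMap.coe_comp'] using hy.continuous_comp x.continuous)
      (fun {x y} hx => by
        simpa [ContinuousLinearMap.mul_def, ContinuousLinearMap.coe_comp'] using hx.comp_clm y), ?_, ?_, ?_⟩
    · exact TwoSidedIdeal.coe_mk' _ _ _ _ _ _
    · rw [TwoSidedIdeal.coe_mk']
      exact isClosed_setOf_isCompactOperator
    · intro htop
      have h1 : IsCompactOperator ⇑(1 : H →L[ℂ] H) := by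
        exact (TwoSidedIdeal.mem_mk' _ _ _ _ _ _ (1 : H →L[ℂ] H)).mp
          ((TwoSidedIdeal.one_mem_iff _).mpr htop)
      obtain ⟨K', hK'c, hK'mem⟩ := h1
      have hpre : ⇑(1 : H →L[ℂ] H) ⁻¹' K' = K' := by
        ext x; simp
      rw [hpre] at hK'mem
      obtain ⟨ε, hε, hball⟩ := Metric.mem_nhds_iff.mp hK'mem
      have hcb : IsCompact (closedBall (0:H) (ε/2)) := by
        apply hK'c.of_isClosed_subset isClosed_closedBall
        exact (closedBall_subset_ball (by linarith)).trans hball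
      exact h_infdim (FiniteDimensional.of_isCompact_closedBall₀ ℂ (by linarith) hcb)
  · intro J hJcl hJtop T hT
    by_contra hc
    exact hJtop ((TwoSidedIdeal.one_mem_iff J).mp (aux_one_mem_of_noncompact J hJcl hT hc))
end
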